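/- Let X be a type and R a set of elements of FreeGroup X. Let X' = X ⊕ R, let ι : FreeGroup X → FreeGroup X' be the homomorphism induced by the left inclusion, and for each r ∈ R write r' = ι(r) and b_r for the generator of FreeGroup X' corresponding to r in the right summand. Let R' = { r'⁻¹·b_r·r'·b_r⁻² : r ∈ R } ∪ { b_r⁻¹·r'·b_r·r'⁻² : r ∈ R }. Fix r₀ ∈ R and let R'' = R' \ { r₀'⁻¹·b_{r₀}·r₀'·b_{r₀}⁻² }. Then there is a surjective group homomorphism from the presented group ⟨X' | R''⟩ onto ℤ, sending every generator from X to 0, sending b_r to 0 for every r ≠ r₀, and sending b_{r₀} to 1. In particular ⟨X' | R''⟩ is infinite. -/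

import Mathlib

/-- The homomorphism `FreeGroup X → FreeGroup (X ⊕ R)` induced by the left inclusion. -/
def iotaHom {X : Type*} (R : Set (FreeGroup X)) :
    FreeGroup X →* FreeGroup (X ⊕ R) :=
  FreeGroup.map Sum.inl

/-- The generator `b_r` of `FreeGroup (X ⊕ R)` corresponding to `r ∈ R`. -/
def bGen {X : Type*} {R : Set (FreeGroup X)} (r : R) : FreeGroup (X ⊕ R) :=
  FreeGroup.of (Sum.inr r)

/-- The doubled relator set
`R' = { r'⁻¹·b_r·r'·b_r⁻² : r ∈ R } ∪ { b_r⁻¹·r'·b_r·r'⁻² : r ∈ R }`. -/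
def doubledRels {X : Type*} (R : Set (FreeGroup X)) : Set (FreeGroup (X ⊕ R)) :=
  (Set.range fun r : R =>
      (iotaHom R r)⁻¹ * bGen r * iotaHom R r * (bGen r ^ 2)⁻¹) ∪
  (Set.range fun r : R =>
      (bGen r)⁻¹ * iotaHom R r * bGen r * (iotaHom R r ^ 2)⁻¹)

/-- Removing the relator `r₀'⁻¹·b_{r₀}·r₀'·b_{r₀}⁻²` from the doubled relator set yields a
group admitting a surjection onto `ℤ` sending all generators from `X` to `0`, `b_r` to `0`
for `r ≠ r₀`, and `b_{r₀}` to `1`; in particular it is infinite. -/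

theorem stmt_7 {X : Type*} (R : Set (FreeGroup X)) (r₀ : R) :
    (∃ f : PresentedGroup
        (doubledRels R \
          {(iotaHom R r₀)⁻¹ * bGen r₀ * iotaHom R r₀ * (bGen r₀ ^ 2)⁻¹}) →*
        Multiplicative ℤ,
      Function.Surjective f ∧
      (∀ x : X, f (PresentedGroup.of (Sum.inl x)) = Multiplicative.ofAdd 0) ∧
      (∀ r : R, r ≠ r₀ →
        f (PresentedGroup.of (Sum.inr r)) = Multiplicative.ofAdd 0) ∧
      f (PresentedGroup.of (Sum.inr r₀)) = Multiplicative.ofAdd 1) ∧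
    Infinite (PresentedGroup
      (doubledRels R \
        {(iotaHom R r₀)⁻¹ * bGen r₀ * iotaHom R r₀ * (bGen r₀ ^ 2)⁻¹})) := by
  classical
  set φ : X ⊕ R → Multiplicative ℤ := fun z =>
    match z with
    | Sum.inl _ => 1
    | Sum.inr r => if r = r₀ then Multiplicative.ofAdd 1 else 1 with hφ
  have hiota : ∀ w : FreeGroup X, FreeGroup.lift φ (iotaHom R w) = 1 := by
    intro w
    have : (FreeGroup.lift φ).comp (iotaHom R) = 1 := by
      apply FreeGroup.ext_hom
      intro x
      simp [iotaHom, hφ]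
    calc FreeGroup.lift φ (iotaHom R w) = ((FreeGroup.lift φ).comp (iotaHom R)) w := rfl
      _ = 1 := by rw [this]; rfl
  have hrels : ∀ r ∈ (doubledRels R \
      {(iotaHom R r₀)⁻¹ * bGen r₀ * iotaHom R r₀ * (bGen r₀ ^ 2)⁻¹}),
      FreeGroup.lift φ r = 1 := by
    rintro w ⟨hw, hne⟩
    rcases hw with ⟨r, rfl⟩ | ⟨r, rfl⟩
    · have hr : r ≠ r₀ := by
        rintro rfl
        exact hne rfl
      simp [hiota, bGen, hφ, hr]
    · by_cases hr : r = r₀ <;> simp [hiota, bGen, hr] <;> simp [hφ, hr]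
  refine ⟨⟨PresentedGroup.toGroup hrels, ?_, ?_, ?_, ?_⟩, ?_⟩
  · intro n
    refine ⟨(PresentedGroup.of (Sum.inr r₀)) ^ (Multiplicative.toAdd n), ?_⟩
    rw [map_zpow, PresentedGroup.toGroup.of]
    show (if r₀ = r₀ then Multiplicative.ofAdd 1 else 1) ^ Multiplicative.toAdd n = n
    rw [if_pos rfl, ← ofAdd_zsmul, smul_eq_mul, mul_one, ofAdd_toAdd]
  · intro x; simp [PresentedGroup.toGroup.of, hφ]
  · intro r hr; simp [PresentedGroup.toGroup.of, hφ, hr]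
  · simp [PresentedGroup.toGroup.of, hφ]
  · have hsurj : Function.Surjective (PresentedGroup.toGroup hrels) := by
      intro n
      refine ⟨(PresentedGroup.of (Sum.inr r₀)) ^ (Multiplicative.toAdd n), ?_⟩
      rw [map_zpow, PresentedGroup.toGroup.of]
      show (if r₀ = r₀ then Multiplicative.ofAdd 1 else 1) ^ Multiplicative.toAdd n = n
      rw [if_pos rfl, ← ofAdd_zsmul, smul_eq_mul, mul_one, ofAdd_toAdd]
    exact Infinite.of_surjective _ hsurj
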